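/- arXiv:2210.09703 — 2 statements merged into one kernel-verified Lean document; each statement's English description precedes it below -/
import Mathlib

section
/- Let W ⊆ C^ω be any objective and M a chromatic memory structure. If M suffices to play optimally for W in all finitely branching one-player arenas of Player 1, then W is M-strongly-monotone. -/
set_option autoImplicit false
set_option linter.unusedSectionVars false

namespace RegularMemory

/-- Concatenation of a finite word with an infinite word. -/
def wcat {C : Type} (w : List C) (x : ℕ → C) : ℕ → C := fun n =>
  if h : n < w.length then w.get ⟨n, h⟩ else x (n - w.length)

/-- The infinite word `w^ω` (junk value if `w` is empty). -/
noncomputable def wpow {C : Type} [Nonempty C] : List C → ℕ → C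
  | [] => fun _ => Classical.arbitrary C
  | (a :: l) => fun n => (a :: l).get ⟨n % (a :: l).length, Nat.mod_lt n (Nat.succ_pos _)⟩

/-- Winning continuations `w⁻¹W` of the finite word `w` for the objective `W`. -/
def contAfter {C : Type} (W : Set (ℕ → C)) (w : List C) : Set (ℕ → C) :=
  {x | wcat w x ∈ W}

/-- Prefix preorder `w₁ ⪯_W w₂`. -/
def prefLe {C : Type} (W : Set (ℕ → C)) (w₁ w₂ : List C) : Prop :=
  contAfter W w₁ ⊆ contAfter W w₂

/-- Strict prefix relation `w₁ ≺_W w₂`. -/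
def prefLt {C : Type} (W : Set (ℕ → C)) (w₁ w₂ : List C) : Prop :=
  prefLe W w₁ w₂ ∧ ¬ prefLe W w₂ w₁

/-- Comparability for the prefix preorder. -/
def PrefComparable {C : Type} (W : Set (ℕ → C)) (w₁ w₂ : List C) : Prop :=
  prefLe W w₁ w₂ ∨ prefLe W w₂ w₁

/-- The general reachability objective derived from `A`: infinite words with a prefix in `A`. -/
def ReachObj {C : Type} (A : Set (List C)) : Set (ℕ → C) :=
  {x | ∃ n : ℕ, (List.ofFn fun i : Fin n => x i) ∈ A}

/-- The general safety objective derived from `A`. -/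
def SafeObj {C : Type} (A : Set (List C)) : Set (ℕ → C) :=
  (ReachObj A)ᶜ

/-- The prefix preorder of `W` has finitely many equivalence classes. -/
def FinClasses {C : Type} (W : Set (ℕ → C)) : Prop :=
  (Set.range fun w : List C => contAfter W w).Finite

/-- The prefix preorder of `W` is well-founded:
every nonempty chain contains a minimal element. -/
def PrefWellFounded {C : Type} (W : Set (ℕ → C)) : Prop :=
  ∀ S : Set (List C), S.Nonempty →
    (∀ w₁ ∈ S, ∀ w₂ ∈ S, PrefComparable W w₁ w₂) →
    ∃ w₀ ∈ S, ∀ w ∈ S, ¬ prefLt W w w₀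

/-- Chromatic memory structure. -/
structure MemStruct (C : Type) where
  M : Type
  init : M
  upd : M → C → M

/-- Extension of the update function to finite words. -/
def MemStruct.updStar {C : Type} (N : MemStruct C) (m : N.M) (w : List C) : N.M :=
  w.foldl N.upd m

/-- The trivial one-state memory structure. -/
def trivMem (C : Type) : MemStruct C :=
  ⟨Unit, (), fun _ _ => ()⟩

/-- `W` is `N`-strongly-monotone. -/
def StronglyMonotone {C : Type} (N : MemStruct C) (W : Set (ℕ → C)) : Prop :=
  ∀ w₁ w₂ : List C,
    N.updStar N.init w₁ = N.updStar N.init w₂ → PrefComparable W w₁ w₂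

/-- `W` is `N`-progress-consistent. -/
def ProgressConsistent {C : Type} [Nonempty C] (N : MemStruct C) (W : Set (ℕ → C)) : Prop :=
  ∀ (m : N.M) (w₁ w₂ : List C),
    N.updStar N.init w₁ = m → N.updStar m w₂ = m →
    prefLt W w₁ (w₁ ++ w₂) → wcat w₁ (wpow w₂) ∈ W

/-- Two-player arena with colored edges; Player-1 vertices have outgoing edges
(so that strategies of Player 1 exist). -/
structure Arena (C : Type) where
  V : Type
  P1 : V → Prop
  E : Set (V × C × V)
  succ : ∀ v : V, P1 v → ∃ e ∈ E, e.1 = v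

namespace Arena

/-- Valid histories starting at a given vertex. -/
def HistFrom {C : Type} (A : Arena C) : A.V → List (A.V × C × A.V) → Prop
  | _, [] => True
  | v, e :: l => e ∈ A.E ∧ e.1 = v ∧ HistFrom A e.2.2 l

/-- Endpoint of a history. -/
def endFrom {C : Type} (A : Arena C) : A.V → List (A.V × C × A.V) → A.V
  | v, [] => v
  | _, e :: l => endFrom A e.2.2 l

/-- Infinite plays from a vertex. -/
def PlayFrom {C : Type} (A : Arena C) (v : A.V) (π : ℕ → A.V × C × A.V) : Prop :=
  (π 0).1 = v ∧ ∀ n : ℕ, π n ∈ A.E ∧ (π n).2.2 = (π (n + 1)).1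

/-- Colors along a play. -/
def playCol {C V : Type} (π : ℕ → V × C × V) : ℕ → C :=
  fun n => (π n).2.1

/-- Strategies of Player 1: on every valid history ending in a Player-1 vertex,
the strategy picks an edge leaving that vertex. -/
structure Strategy {C : Type} (A : Arena C) where
  next : A.V → List (A.V × C × A.V) → A.V × C × A.V
  legal : ∀ (v : A.V) (l : List (A.V × C × A.V)),
    A.HistFrom v l → A.P1 (A.endFrom v l) →
      next v l ∈ A.E ∧ (next v l).1 = A.endFrom v l

/-- A play from `v` is consistent with the strategy `σ`. -/
def Strategy.Consistent {C : Type} {A : Arena C} (σ : A.Strategy) (v : A.V)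
    (π : ℕ → A.V × C × A.V) : Prop :=
  ∀ n : ℕ, A.P1 (A.endFrom v (List.ofFn fun i : Fin n => π i)) →
    π n = σ.next v (List.ofFn fun i : Fin n => π i)

/-- `σ` is winning from `v` for the objective `W`. -/
def Strategy.WinningFrom {C : Type} {A : Arena C} (σ : A.Strategy)
    (W : Set (ℕ → C)) (v : A.V) : Prop :=
  ∀ π : ℕ → A.V × C × A.V, A.PlayFrom v π → σ.Consistent v π → playCol π ∈ W

/-- `σ` is optimal in `(A, W)`: winning from every vertex from which
Player 1 has some winning strategy. -/
def Strategy.Optimal {C : Type} {A : Arena C} (σ : A.Strategy) (W : Set (ℕ → C)) : Prop :=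
  ∀ v : A.V, (∃ σ' : A.Strategy, σ'.WinningFrom W v) → σ.WinningFrom W v

/-- `σ` is based on the memory structure `N`. -/
def Strategy.BasedOn {C : Type} {A : Arena C} (σ : A.Strategy) (N : MemStruct C) : Prop :=
  ∃ nxt : A.V → N.M → A.V × C × A.V,
    ∀ (v : A.V) (l : List (A.V × C × A.V)),
      A.HistFrom v l → A.P1 (A.endFrom v l) →
        σ.next v l = nxt (A.endFrom v l) (N.updStar N.init (l.map fun e => e.2.1))

/-- Finite arena: finitely many vertices and edges. -/
def IsFinite {C : Type} (A : Arena C) : Prop := Finite A.V ∧ A.E.Finite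

/-- Finitely branching arena. -/
def FinBranching {C : Type} (A : Arena C) : Prop :=
  ∀ v : A.V, {e ∈ A.E | e.1 = v}.Finite

/-- One-player arena of Player 1. -/
def OneP1 {C : Type} (A : Arena C) : Prop := ∀ v : A.V, A.P1 v

end Arena

/-- `N` suffices to play optimally for `W` in all arenas of the class `P`. -/
def SufficesIn {C : Type} (N : MemStruct C) (W : Set (ℕ → C))
    (P : Arena C → Prop) : Prop :=
  ∀ A : Arena C, P A → ∃ σ : A.Strategy, σ.BasedOn N ∧ σ.Optimal W

/-- Deterministic automaton (with complete transition function). -/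
structure DetAuto (C : Type) where
  Q : Type
  init : Q
  δ : Q → C → Q
  F : Set Q

/-- Extension of the transition function to finite words. -/
def DetAuto.δStar {C : Type} (D : DetAuto C) (q : D.Q) (w : List C) : D.Q :=
  w.foldl D.δ q

/-- Language recognized by `D`. -/
def DetAuto.lang {C : Type} (D : DetAuto C) : Set (List C) :=
  {w | D.δStar D.init w ∈ D.F}

/-- Prefix preorder extended to automaton states. -/
def statePrefLe {C : Type} (D : DetAuto C) (W : Set (ℕ → C)) (q₁ q₂ : D.Q) : Prop :=
  ∀ w₁ w₂ : List C,
    D.δStar D.init w₁ = q₁ → D.δStar D.init w₂ = q₂ → prefLe W w₁ w₂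

def statePrefLt {C : Type} (D : DetAuto C) (W : Set (ℕ → C)) (q₁ q₂ : D.Q) : Prop :=
  statePrefLe D W q₁ q₂ ∧ ¬ statePrefLe D W q₂ q₁

def StateComparable {C : Type} (D : DetAuto C) (W : Set (ℕ → C)) (q₁ q₂ : D.Q) : Prop :=
  statePrefLe D W q₁ q₂ ∨ statePrefLe D W q₂ q₁

/-- Monotone decomposition of `D` with `k` sets. -/
def MonotoneDecomposition {C : Type} (D : DetAuto C) (W : Set (ℕ → C))
    {k : ℕ} (Γ : Fin k → Set D.Q) : Prop :=
  (∀ q : D.Q, ∃ i : Fin k, q ∈ Γ i) ∧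
  (∀ (c : C) (i : Fin k), ∃ j : Fin k, (fun q => D.δ q c) '' Γ i ⊆ Γ j) ∧
  (∀ i : Fin k, ∀ q₁ ∈ Γ i, ∀ q₂ ∈ Γ i, StateComparable D W q₁ q₂)

end RegularMemory


namespace RegularMemory

section Aux

variable {C : Type}

/-! ### General lemmas about arenas, histories and plays -/

lemma endFrom_append (A : Arena C) (l₁ l₂ : List (A.V × C × A.V)) (v : A.V) :
    A.endFrom v (l₁ ++ l₂) = A.endFrom (A.endFrom v l₁) l₂ := by
  induction l₁ generalizing v with
  | nil => rfl
  | cons e l ih => simpa [Arena.endFrom] using ih e.2.2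

lemma histFrom_append (A : Arena C) (l₁ l₂ : List (A.V × C × A.V)) (v : A.V) :
    A.HistFrom v (l₁ ++ l₂) ↔ A.HistFrom v l₁ ∧ A.HistFrom (A.endFrom v l₁) l₂ := by
  induction l₁ generalizing v with
  | nil => simp [Arena.HistFrom, Arena.endFrom]
  | cons e l ih =>
      simp only [List.cons_append, Arena.HistFrom, Arena.endFrom, List.append_eq, ih, and_assoc]

lemma endFrom_play {A : Arena C} {v : A.V} {π : ℕ → A.V × C × A.V}
    (h : A.PlayFrom v π) (n : ℕ) :
    A.endFrom v (List.ofFn fun i : Fin n => π i) = (π n).1 := by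
  induction n with
  | zero => exact h.1.symm
  | succ n ih =>
      rw [List.ofFn_succ', List.concat_eq_append, endFrom_append]
      have : (List.ofFn fun i : Fin n => π i.castSucc) = List.ofFn fun i : Fin n => π i := by
        simp
      rw [this, ih]
      show (π n).2.2 = (π (n+1)).1
      exact (h.2 n).2

lemma histFrom_play {A : Arena C} {v : A.V} {π : ℕ → A.V × C × A.V}
    (h : A.PlayFrom v π) (n : ℕ) :
    A.HistFrom v (List.ofFn fun i : Fin n => π i) := by
  induction n with
  | zero => trivial
  | succ n ih =>
      rw [List.ofFn_succ', List.concat_eq_append, histFrom_append]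
      have he : (List.ofFn fun i : Fin n => π i.castSucc) = List.ofFn fun i : Fin n => π i := by
        simp
      rw [he]
      refine ⟨ih, (h.2 n).1, ?_, trivial⟩
      rw [endFrom_play h n]
      simp

/-! ### The play generated by a strategy from a vertex -/

def histOf {A : Arena C} (σ : A.Strategy) (v : A.V) : ℕ → List (A.V × C × A.V)
  | 0 => []
  | n+1 => histOf σ v n ++ [σ.next v (histOf σ v n)]

def playOf {A : Arena C} (σ : A.Strategy) (v : A.V) (n : ℕ) : A.V × C × A.V :=
  σ.next v (histOf σ v n)

lemma histOf_ofFn {A : Arena C} (σ : A.Strategy) (v : A.V) (n : ℕ) :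
    histOf σ v n = List.ofFn fun i : Fin n => playOf σ v i := by
  induction n with
  | zero => rfl
  | succ n ih =>
      rw [List.ofFn_succ', List.concat_eq_append]
      have he : (List.ofFn fun i : Fin n => playOf σ v i.castSucc)
          = List.ofFn fun i : Fin n => playOf σ v i := by simp
      rw [he, ← ih]
      rfl

lemma histFrom_histOf {A : Arena C} (σ : A.Strategy) (v : A.V)
    (hP1 : ∀ u : A.V, A.P1 u) (n : ℕ) : A.HistFrom v (histOf σ v n) := by
  induction n with
  | zero => trivial
  | succ n ih =>
      rw [histOf, histFrom_append]
      obtain ⟨h1, h2⟩ := σ.legal v (histOf σ v n) ih (hP1 _)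
      exact ⟨ih, h1, h2, trivial⟩

lemma playFrom_playOf {A : Arena C} (σ : A.Strategy) (v : A.V)
    (hP1 : ∀ u : A.V, A.P1 u) : A.PlayFrom v (playOf σ v) := by
  constructor
  · exact (σ.legal v [] trivial (hP1 _)).2
  · intro n
    refine ⟨(σ.legal v (histOf σ v n) (histFrom_histOf σ v hP1 n) (hP1 _)).1, ?_⟩
    have h2 := (σ.legal v (histOf σ v (n+1)) (histFrom_histOf σ v hP1 (n+1)) (hP1 _)).2
    show (σ.next v (histOf σ v n)).2.2 = (σ.next v (histOf σ v (n+1))).1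
    rw [h2]
    show _ = A.endFrom v (histOf σ v n ++ [σ.next v (histOf σ v n)])
    rw [endFrom_append]
    rfl

lemma consistent_playOf {A : Arena C} (σ : A.Strategy) (v : A.V) :
    σ.Consistent v (playOf σ v) := by
  intro n _
  rw [← histOf_ofFn]
  rfl

/-! ### The gadget arena -/

/-- Vertices of the gadget arena: prefix vertices, a merge vertex, suffix vertices. -/
abbrev GV : Type := Sum (Bool × ℕ) (Sum Unit (Bool × ℕ))

def gu : GV := Sum.inr (Sum.inl ())
def gpre (j : Bool) (i : ℕ) : GV := Sum.inl (j, i)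
def gsuf (j : Bool) (i : ℕ) : GV := Sum.inr (Sum.inr (j, i))

variable [Nonempty C]

attribute [local instance] Classical.propDecidable

noncomputable def gstep (w : Bool → List C) (x : Bool → ℕ → C) : GV → C × GV
  | Sum.inl (j, i) => ((w j).getD i (Classical.arbitrary C),
      if i + 1 < (w j).length then gpre j (i+1) else gu)
  | Sum.inr (Sum.inl _) => (x true 0, gsuf true 1)
  | Sum.inr (Sum.inr (j, i)) => (x j i, gsuf j (i+1))

noncomputable def gchoice (x : Bool → ℕ → C) (j : Bool) : GV × C × GV := (gu, x j 0, gsuf j 1)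

@[reducible] noncomputable def gArena (w : Bool → List C) (x : Bool → ℕ → C) : Arena C where
  V := GV
  P1 _ := True
  E := {e | e.2 = gstep w x e.1} ∪ {gchoice x true, gchoice x false}
  succ v _ := ⟨(v, gstep w x v), Or.inl rfl, rfl⟩

lemma gArena_finBranching (w : Bool → List C) (x : Bool → ℕ → C) :
    (gArena w x).FinBranching := by
  intro v
  have hfin : ({(v, gstep w x v), gchoice x true, gchoice x false}
      : Set (GV × C × GV)).Finite :=
    ((Set.finite_singleton _).insert _).insert _
  refine hfin.subset ?_
  rintro e ⟨he, hv⟩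
  rcases he with h | h
  · refine Or.inl ?_
    have h0 : e = (e.1, e.2) := rfl
    rw [h0, h, hv]
  · exact Or.inr h

lemma gArena_oneP1 (w : Bool → List C) (x : Bool → ℕ → C) : (gArena w x).OneP1 :=
  fun _ => trivial

/-- Intended positions along a play spelling `w j` then `x j'`. -/
def gpos (w : Bool → List C) (j j' : Bool) (n : ℕ) : GV :=
  if n < (w j).length then gpre j n
  else if n = (w j).length then gu
  else gsuf j' (n - (w j).length)

noncomputable def gplay (w : Bool → List C) (x : Bool → ℕ → C) (j j' : Bool) (n : ℕ) :
    GV × C × GV :=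
  (gpos w j j' n, wcat (w j) (x j') n, gpos w j j' (n+1))

lemma gpos_eq_gu_iff (w : Bool → List C) (j j' : Bool) (n : ℕ) :
    gpos w j j' n = gu ↔ n = (w j).length := by
  unfold gpos
  split_ifs with h1 h2 <;> simp [gpre, gsuf, gu] <;> omega

lemma gstep_gpos (w : Bool → List C) (x : Bool → ℕ → C) (j j' : Bool) (n : ℕ)
    (hn : n ≠ (w j).length) :
    gstep w x (gpos w j j' n) = (wcat (w j) (x j') n, gpos w j j' (n+1)) := by
  rcases lt_or_gt_of_ne hn with h | h
  · have h0 : gpos w j j' n = gpre j n := by unfold gpos; rw [if_pos h]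
    rw [h0]
    show ((w j).getD n (Classical.arbitrary C),
        if n + 1 < (w j).length then gpre j (n+1) else gu) = _
    have hc : (w j).getD n (Classical.arbitrary C) = wcat (w j) (x j') n := by
      rw [wcat, dif_pos h, List.getD_eq_getElem _ _ h]
      rfl
    have hp : (if n + 1 < (w j).length then gpre j (n+1) else gu) = gpos w j j' (n+1) := by
      unfold gpos
      by_cases h2 : n + 1 < (w j).length
      · rw [if_pos h2, if_pos h2]
      · have : n + 1 = (w j).length := by omega
        rw [if_neg h2, if_neg h2, if_pos this]
    rw [hc, hp]
  · have h0 : gpos w j j' n = gsuf j' (n - (w j).length) := by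
      unfold gpos
      rw [if_neg (by omega), if_neg (by omega)]
    rw [h0]
    show (x j' (n - (w j).length), gsuf j' (n - (w j).length + 1)) = _
    have hc : wcat (w j) (x j') n = x j' (n - (w j).length) := by
      rw [wcat, dif_neg (by omega)]
    have hp : gpos w j j' (n+1) = gsuf j' (n - (w j).length + 1) := by
      unfold gpos
      rw [if_neg (by omega), if_neg (by omega)]
      congr 1
      omega
    rw [hc, hp]

lemma gplay_at_len (w : Bool → List C) (x : Bool → ℕ → C) (j j' : Bool) :
    gplay w x j j' (w j).length = gchoice x j' := by
  unfold gplay gchoice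
  have h1 : gpos w j j' (w j).length = gu := (gpos_eq_gu_iff w j j' _).mpr rfl
  have h2 : wcat (w j) (x j') (w j).length = x j' 0 := by
    rw [wcat, dif_neg (lt_irrefl _)]
    simp
  have h3 : gpos w j j' ((w j).length + 1) = gsuf j' 1 := by
    unfold gpos
    rw [if_neg (by omega), if_neg (by omega)]
    congr 1
    omega
  rw [h1, h2, h3]

lemma gchoice_mem_E (w : Bool → List C) (x : Bool → ℕ → C) (j' : Bool) :
    gchoice x j' ∈ (gArena w x).E := by
  cases j'
  · exact Or.inr (Or.inr rfl)
  · exact Or.inr (Or.inl rfl)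

lemma gplay_mem_E (w : Bool → List C) (x : Bool → ℕ → C) (j j' : Bool) (n : ℕ) :
    gplay w x j j' n ∈ (gArena w x).E := by
  by_cases hn : n = (w j).length
  · rw [hn, gplay_at_len]
    exact gchoice_mem_E w x j'
  · exact Or.inl (gstep_gpos w x j j' n hn).symm

lemma gplay_playFrom (w : Bool → List C) (x : Bool → ℕ → C) (j j' : Bool) :
    (gArena w x).PlayFrom (gpos w j j' 0) (gplay w x j j') :=
  ⟨rfl, fun n => ⟨gplay_mem_E w x j j' n, rfl⟩⟩

/-- Workhorse: a play from the start vertex that follows `gstep` outside `gu`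
and takes the `j'` choice at `gu` is exactly `gplay w x j j'`. -/
lemma play_eq_gplay {w : Bool → List C} {x : Bool → ℕ → C} {j j' : Bool}
    {π : ℕ → GV × C × GV}
    (hplay : (gArena w x).PlayFrom (gpos w j j' 0) π)
    (H1 : ∀ n, (π n).1 ≠ gu → π n = ((π n).1, gstep w x (π n).1))
    (H2 : ∀ n, (π n).1 = gu → (∀ i < n, π i = gplay w x j j' i) →
        n = (w j).length → π n = gchoice x j') :
    ∀ n, π n = gplay w x j j' n := by
  intro n
  induction n using Nat.strong_induction_on with
  | _ n ih =>
    have h1 : (π n).1 = gpos w j j' n := by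
      cases n with
      | zero => exact hplay.1
      | succ k =>
          rw [← (hplay.2 k).2, ih k (Nat.lt_succ_self k)]
          rfl
    by_cases hu : gpos w j j' n = gu
    · have hn := (gpos_eq_gu_iff w j j' n).mp hu
      have := H2 n (h1.trans hu) (fun i hi => ih i hi) hn
      rw [this, hn, gplay_at_len]
    · have hne : (π n).1 ≠ gu := by rw [h1]; exact hu
      have := H1 n hne
      rw [this, h1, gstep_gpos w x j j' n (fun h => hu ((gpos_eq_gu_iff w j j' n).mpr h))]
      rfl

/-! ### The positional winning strategy -/

noncomputable def gstrat (w : Bool → List C) (x : Bool → ℕ → C) (j : Bool) : (gArena w x).Strategy where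
  next v l :=
    if (gArena w x).endFrom v l = gu then gchoice x j
    else ((gArena w x).endFrom v l, gstep w x ((gArena w x).endFrom v l))
  legal v l _ _ := by
    dsimp only
    split_ifs with h
    · exact ⟨gchoice_mem_E w x j, h.symm⟩
    · exact ⟨Or.inl rfl, rfl⟩

lemma gstrat_next (w : Bool → List C) (x : Bool → ℕ → C) (j : Bool)
    (v : GV) (l : List (GV × C × GV)) :
    (gstrat w x j).next v l =
      if (gArena w x).endFrom v l = gu then gchoice x j
      else ((gArena w x).endFrom v l, gstep w x ((gArena w x).endFrom v l)) := rfl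

lemma gstrat_winning (w : Bool → List C) (x : Bool → ℕ → C) (W : Set (ℕ → C)) (j : Bool)
    (hW : wcat (w j) (x j) ∈ W) :
    (gstrat w x j).WinningFrom W (gpos w j j 0) := by
  intro π hplay hcons
  have hstep : ∀ n, π n = if (π n).1 = gu then gchoice x j
      else ((π n).1, gstep w x (π n).1) := by
    intro n
    have e := hcons n trivial
    rw [gstrat_next] at e
    simp only [endFrom_play hplay n] at e
    exact e
  have key : ∀ n, π n = gplay w x j j n := by
    apply play_eq_gplay hplay
    · intro n hne
      rw [hstep n, if_neg hne]
    · intro n hgu _ _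
      rw [hstep n, if_pos hgu]
  have : Arena.playCol π = wcat (w j) (x j) := by
    funext n
    rw [Arena.playCol, key n]
    rfl
  rwa [this]

end Aux

/-- for any objective `W`, if the memory structure `N` suffices to play
optimally for `W` in all finitely branching one-player arenas of Player 1, then `W`
is `N`-strongly-monotone. -/
theorem strongMonotony_necessary_general {C : Type} [Nonempty C]
    (W : Set (ℕ → C)) (N : MemStruct C)
    (hsuff : SufficesIn N W (fun A => A.FinBranching ∧ A.OneP1)) :
    StronglyMonotone N W := by
  classical
  intro w₁ w₂ hmem
  by_contra hcomp
  rw [PrefComparable] at hcomp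
  push_neg at hcomp
  obtain ⟨h12, h21⟩ := hcomp
  rw [prefLe, Set.not_subset] at h12 h21
  obtain ⟨a, ha1, ha2⟩ := h12
  obtain ⟨b, hb2, hb1⟩ := h21
  set w : Bool → List C := fun j => cond j w₁ w₂ with hw
  set x : Bool → ℕ → C := fun j => cond j a b with hx
  obtain ⟨σ, ⟨nxt, hbased⟩, hopt⟩ :=
    hsuff (gArena w x) ⟨gArena_finBranching w x, gArena_oneP1 w x⟩
  set m : N.M := N.updStar N.init w₁ with hm0
  set estar : GV × C × GV := nxt gu m with hestar
  set jstar : Bool := if estar = gchoice x false then false else true with hjstar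
  have hsufne : gsuf true 1 ≠ gsuf false 1 := by simp [gsuf]
  have hshape : estar ∈ (gArena w x).E → estar.1 = gu → estar = gchoice x jstar := by
    intro hE h1
    have halt : estar = gchoice x true ∨ estar = gchoice x false := by
      simp only [gArena, Set.mem_union, Set.mem_insert_iff, Set.mem_singleton_iff,
        Set.mem_setOf_eq] at hE
      rcases hE with h | h | h
      · left
        have h0 : estar = (estar.1, estar.2) := rfl
        rw [h0, h, h1]
        rfl
      · exact Or.inl h
      · exact Or.inr h
    by_cases hf : estar = gchoice x false
    · rw [hjstar, if_pos hf]
      exact hf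
    · rw [hjstar, if_neg hf]
      rcases halt with h | h
      · exact h
      · exact absurd h hf
  have hWj : ∀ j : Bool, wcat (w j) (x j) ∈ W := by
    intro j
    cases j
    · exact hb2
    · exact ha1
  have hupd : ∀ j : Bool, N.updStar N.init (w j) = m := by
    intro j
    cases j
    · exact hmem.symm
    · rfl
  have main : ∀ j : Bool, wcat (w j) (x jstar) ∈ W := by
    intro j
    have hwin : σ.WinningFrom W (gpos w j j 0) :=
      hopt _ ⟨gstrat w x j, gstrat_winning w x W j (hWj j)⟩
    have hρplay := playFrom_playOf σ (gpos w j j 0) (fun _ => trivial)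
    have hρcons := consistent_playOf σ (gpos w j j 0)
    have hstart : gpos w j j 0 = gpos w j jstar 0 := by
      unfold gpos
      split_ifs with h1 h2
      · rfl
      · rfl
      · omega
    have key : ∀ n, playOf σ (gpos w j j 0) n = gplay w x j jstar n := by
      apply play_eq_gplay (hstart ▸ hρplay)
      · intro n hne
        have hE := (hρplay.2 n).1
        simp only [gArena, Set.mem_union, Set.mem_insert_iff, Set.mem_singleton_iff,
          Set.mem_setOf_eq] at hE
        rcases hE with h | h | h
        · rw [← h]
        · exact absurd (by rw [h]; rfl : (playOf σ (gpos w j j 0) n).1 = gu) hne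
        · exact absurd (by rw [h]; rfl : (playOf σ (gpos w j j 0) n).1 = gu) hne
      · intro n hgu hpref hn
        have hhist := histFrom_histOf σ (gpos w j j 0) (fun _ => trivial) n
        have hb := hbased (gpos w j j 0) (histOf σ (gpos w j j 0) n) hhist trivial
        have hend : (gArena w x).endFrom (gpos w j j 0) (histOf σ (gpos w j j 0) n) = gu := by
          rw [histOf_ofFn, endFrom_play hρplay n]
          exact hgu
        have hcol : (histOf σ (gpos w j j 0) n).map (fun e => e.2.1) = w j := by
          rw [histOf_ofFn, List.map_ofFn]
          refine List.ext_get (by simp [hn]) ?_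
          intro i hi1 hi2
          have hi : i < n := by simpa using hi1
          rw [List.get_ofFn]
          show (playOf σ (gpos w j j 0) i).2.1 = _
          rw [hpref i hi]
          show wcat (w j) (x jstar) i = _
          rw [wcat, dif_pos hi2]
        have heq : playOf σ (gpos w j j 0) n = estar := by
          show σ.next (gpos w j j 0) (histOf σ (gpos w j j 0) n) = estar
          rw [hb, hend, hcol, hupd j]
        have hE := (hρplay.2 n).1
        rw [heq] at hE
        have h1 : estar.1 = gu := by
          rw [← heq]
          exact hgu
        rw [heq, hshape hE h1]
    have hcolρ : Arena.playCol (playOf σ (gpos w j j 0)) = wcat (w j) (x jstar) := by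
      funext n
      rw [Arena.playCol, key n]
      rfl
    have hfin := hwin _ hρplay hρcons
    rwa [hcolρ] at hfin
  have hmt := main true
  have hmf := main false
  cases hjs : jstar
  · rw [hjs] at hmt
    exact hb1 hmt
  · rw [hjs] at hmf
    exact ha2 hmf

end RegularMemory
end

section
/- Let W be a general safety objective over C whose prefix preorder ⪯_W is well-founded (in particular this holds if W is regular), and let M be a chromatic memory structure. Then M suffices to play optimally for W in all arenas (of any cardinality) if and only if W is M-strongly-monotone. -/
set_option autoImplicit false

namespace RegularMemory


/-! ### Auxiliary word lemmas -/

section Words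

variable {C : Type}

/-- Prepend one letter to an infinite word. -/
def consW (c : C) (x : ℕ → C) : ℕ → C := fun n =>
  match n with
  | 0 => c
  | (k+1) => x k

lemma wcat_nil (x : ℕ → C) : wcat [] x = x := by
  funext n; simp [wcat]

lemma wcat_cons (a : C) (w : List C) (x : ℕ → C) :
    wcat (a :: w) x = consW a (wcat w x) := by
  funext n
  cases n with
  | zero => simp [wcat, consW]
  | succ k =>
      simp only [wcat, consW, List.length_cons, Nat.succ_lt_succ_iff]
      by_cases h : k < w.length
      · simp [h]
      · simp [h, Nat.succ_sub_succ]

lemma wcat_append (w₁ w₂ : List C) (x : ℕ → C) :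
    wcat (w₁ ++ w₂) x = wcat w₁ (wcat w₂ x) := by
  induction w₁ with
  | nil => simp [wcat_nil]
  | cons a w ih => simp [List.cons_append, wcat_cons, ih]

lemma wcat_singleton (c : C) (x : ℕ → C) : wcat [c] x = consW c x := by
  rw [show [c] = c :: ([] : List C) from rfl, wcat_cons, wcat_nil]

lemma contAfter_nil (W : Set (ℕ → C)) : contAfter W [] = W := by
  ext x; simp [contAfter, wcat_nil]

lemma contAfter_snoc (W : Set (ℕ → C)) (w : List C) (c : C) :
    contAfter W (w ++ [c]) = {x | consW c x ∈ contAfter W w} := by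
  ext x; simp [contAfter, wcat_append, wcat_singleton]

lemma prefLe_snoc {W : Set (ℕ → C)} {w₁ w₂ : List C} (h : prefLe W w₁ w₂) (c : C) :
    prefLe W (w₁ ++ [c]) (w₂ ++ [c]) := by
  intro x hx
  rw [contAfter_snoc] at hx ⊢
  exact h hx

lemma ofFn_snoc {α : Type} (g : ℕ → α) (n : ℕ) :
    (List.ofFn fun i : Fin (n+1) => g i) = (List.ofFn fun i : Fin n => g i) ++ [g n] := by
  rw [List.ofFn_succ']; simp [List.concat_eq_append]

lemma wcat_take (w : List C) (x : ℕ → C) :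
    (List.ofFn fun i : Fin w.length => wcat w x i) = w := by
  have h : (fun i : Fin w.length => wcat w x i) = w.get := by
    funext i; simp [wcat, i.isLt]
  rw [h, List.ofFn_get]

lemma wcat_ofFn_eq (w : List C) (x : ℕ → C) (K : ℕ) (h : w.length = K) :
    (List.ofFn fun i : Fin K => wcat w x i) = w := by
  subst h; exact wcat_take w x

lemma updStar_snoc (N : MemStruct C) (m : N.M) (w : List C) (c : C) :
    N.updStar m (w ++ [c]) = N.upd (N.updStar m w) c := by
  simp [MemStruct.updStar]

end Words

/-! ### Arena lemmas -/

section ArenaLemmas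

variable {C : Type} {G : Arena C}

lemma endFrom_append_s4 (v : G.V) (l l' : List (G.V × C × G.V)) :
    G.endFrom v (l ++ l') = G.endFrom (G.endFrom v l) l' := by
  induction l generalizing v with
  | nil => rfl
  | cons e l ih => simpa [Arena.endFrom] using ih e.2.2

lemma endFrom_snoc (v : G.V) (l : List (G.V × C × G.V)) (e : G.V × C × G.V) :
    G.endFrom v (l ++ [e]) = e.2.2 := by
  rw [endFrom_append_s4]; rfl

lemma histFrom_snoc (v : G.V) (l : List (G.V × C × G.V)) (e : G.V × C × G.V) :
    G.HistFrom v (l ++ [e]) ↔ G.HistFrom v l ∧ e ∈ G.E ∧ e.1 = G.endFrom v l := by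
  induction l generalizing v with
  | nil => simp [Arena.HistFrom, Arena.endFrom]
  | cons f l ih =>
      constructor
      · rintro ⟨h1, h2, h3⟩
        have h3' := (ih f.2.2).mp h3
        exact ⟨⟨h1, h2, h3'.1⟩, h3'.2.1, h3'.2.2⟩
      · rintro ⟨⟨h1, h2, h3⟩, h4, h5⟩
        exact ⟨h1, h2, (ih _).mpr ⟨h3, h4, h5⟩⟩

lemma play_hist {v : G.V} {π : ℕ → G.V × C × G.V} (h : G.PlayFrom v π) (n : ℕ) :
    G.HistFrom v (List.ofFn fun i : Fin n => π i) ∧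
      G.endFrom v (List.ofFn fun i : Fin n => π i) = (π n).1 := by
  induction n with
  | zero => exact ⟨trivial, h.1.symm⟩
  | succ n ih =>
      rw [ofFn_snoc (fun k => π k) n, histFrom_snoc, endFrom_snoc]
      exact ⟨⟨ih.1, (h.2 n).1, ih.2.symm⟩, (h.2 n).2⟩

lemma map_colors (π : ℕ → G.V × C × G.V) (n : ℕ) :
    (List.ofFn fun i : Fin n => π i).map (fun e => e.2.1) =
      List.ofFn fun i : Fin n => Arena.playCol π i := by
  rw [List.map_ofFn]; rfl

/-- Player 1 can win from `v` for objective `X`. -/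
def Wins (G : Arena C) (X : Set (ℕ → C)) (v : G.V) : Prop :=
  ∃ τ : G.Strategy, τ.WinningFrom X v

lemma Wins.mono {X Y : Set (ℕ → C)} {v : G.V} (h : Wins G X v) (hXY : X ⊆ Y) :
    Wins G Y v := by
  obtain ⟨τ, hτ⟩ := h
  exact ⟨τ, fun π hp hc => hXY (hτ π hp hc)⟩

lemma residual {v : G.V} {X : Set (ℕ → C)} (τ : G.Strategy)
    (hwin : τ.WinningFrom X v) (e : G.V × C × G.V) (he : e ∈ G.E) (he1 : e.1 = v)
    (hfirst : G.P1 v → e = τ.next v []) :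
    Wins G {x | consW e.2.1 x ∈ X} e.2.2 := by
  classical
  refine ⟨⟨fun u l => if u = e.2.2 then τ.next v (e :: l) else τ.next u l, ?_⟩, ?_⟩
  · intro u l hl hp
    by_cases hu : u = e.2.2
    · subst hu
      simp only [if_pos rfl]
      have hhist : G.HistFrom v (e :: l) := ⟨he, he1, hl⟩
      have hend : G.endFrom v (e :: l) = G.endFrom e.2.2 l := rfl
      have := τ.legal v (e :: l) hhist (by rw [hend]; exact hp)
      rwa [hend] at this
    · simp only [if_neg hu]
      exact τ.legal u l hl hp
  · intro π' hp' hc'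
    set π : ℕ → G.V × C × G.V := fun n => Nat.rec e (fun k _ => π' k) n with hπ
    have hπ0 : π 0 = e := rfl
    have hπs : ∀ n, π (n+1) = π' n := fun n => rfl
    have hplay : G.PlayFrom v π := by
      refine ⟨he1, fun n => ?_⟩
      cases n with
      | zero => exact ⟨he, by rw [hπ0, hπs]; exact hp'.1.symm⟩
      | succ n => rw [hπs, hπs]; exact hp'.2 n
    have hofn : ∀ n, (List.ofFn fun i : Fin (n+1) => π i) =
        e :: List.ofFn fun i : Fin n => π' i := by
      intro n
      rw [List.ofFn_succ]
      rfl
    have hcons : τ.Consistent v π := by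
      intro n hpn
      cases n with
      | zero =>
          simp only [List.ofFn_zero] at hpn ⊢
          exact hfirst hpn
      | succ n =>
          rw [hofn] at hpn ⊢
          have hpn' : G.P1 (G.endFrom e.2.2 (List.ofFn fun i : Fin n => π' i)) := hpn
          have := hc' n hpn'
          rw [hπs]
          calc π' n = (if e.2.2 = e.2.2 then τ.next v (e :: List.ofFn fun i : Fin n => π' i)
              else τ.next e.2.2 (List.ofFn fun i : Fin n => π' i)) := this
            _ = τ.next v (e :: List.ofFn fun i : Fin n => π' i) := if_pos rfl
    have hX : Arena.playCol π ∈ X := hwin π hplay hcons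
    have hcol : Arena.playCol π = consW e.2.1 (Arena.playCol π') := by
      funext n; cases n with
      | zero => rfl
      | succ k => rfl
    rw [hcol] at hX
    exact hX

lemma wins_P1_step {v : G.V} {X : Set (ℕ → C)} (hp : G.P1 v) (hw : Wins G X v) :
    ∃ e, e ∈ G.E ∧ e.1 = v ∧ Wins G {x | consW e.2.1 x ∈ X} e.2.2 := by
  obtain ⟨τ, hτ⟩ := hw
  have hleg := τ.legal v [] trivial hp
  exact ⟨τ.next v [], hleg.1, hleg.2, residual τ hτ _ hleg.1 hleg.2 (fun _ => rfl)⟩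

lemma wins_P2_step {v : G.V} {X : Set (ℕ → C)} (hp : ¬ G.P1 v) (hw : Wins G X v)
    (e : G.V × C × G.V) (he : e ∈ G.E) (he1 : e.1 = v) :
    Wins G {x | consW e.2.1 x ∈ X} e.2.2 := by
  obtain ⟨τ, hτ⟩ := hw
  exact residual τ hτ e he he1 (fun h => absurd h hp)

lemma exists_play [Nonempty C] (τ : G.Strategy) (I : G.V → Prop) (v : G.V) (hIv : I v)
    (hP2 : ∀ u, I u → ¬ G.P1 u → ∃ e, e ∈ G.E ∧ e.1 = u ∧ I e.2.2)
    (hP1 : ∀ l, G.HistFrom v l → G.P1 (G.endFrom v l) → I (G.endFrom v l) →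
      I (τ.next v l).2.2) :
    ∃ π, G.PlayFrom v π ∧ τ.Consistent v π ∧ ∀ n, I ((π n).1) := by
  classical
  set step : List (G.V × C × G.V) → G.V × C × G.V := fun l =>
    if G.P1 (G.endFrom v l) then τ.next v l
    else if h2 : ∃ e, e ∈ G.E ∧ e.1 = G.endFrom v l ∧ I e.2.2 then h2.choose
    else (v, Classical.arbitrary C, v) with hstep
  have SP : ∀ l, G.HistFrom v l → I (G.endFrom v l) →
      step l ∈ G.E ∧ (step l).1 = G.endFrom v l ∧ I ((step l).2.2) := by
    intro l hl hI
    by_cases hp : G.P1 (G.endFrom v l)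
    · have hleg := τ.legal v l hl hp
      have hI' := hP1 l hl hp hI
      simp only [hstep, if_pos hp]
      exact ⟨hleg.1, hleg.2, hI'⟩
    · have h2 : ∃ e, e ∈ G.E ∧ e.1 = G.endFrom v l ∧ I e.2.2 :=
        hP2 _ hI hp
      simp only [hstep, if_neg hp, dif_pos h2]
      exact h2.choose_spec
  set h : ℕ → List (G.V × C × G.V) := fun n =>
    Nat.rec [] (fun _ ih => ih ++ [step ih]) n with hh
  have hh0 : h 0 = [] := rfl
  have hhs : ∀ n, h (n+1) = h n ++ [step (h n)] := fun n => rfl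
  have K : ∀ n, G.HistFrom v (h n) ∧ I (G.endFrom v (h n)) := by
    intro n
    induction n with
    | zero => exact ⟨trivial, hIv⟩
    | succ n ih =>
        obtain ⟨hE, h1, hI⟩ := SP (h n) ih.1 ih.2
        rw [hhs, histFrom_snoc, endFrom_snoc]
        exact ⟨⟨ih.1, hE, h1⟩, hI⟩
  set π : ℕ → G.V × C × G.V := fun n => step (h n) with hπ
  have hofn : ∀ n, h n = List.ofFn fun i : Fin n => π i := by
    intro n
    induction n with
    | zero => rfl
    | succ n ih =>
        rw [hhs, ofFn_snoc (fun k => π k) n]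
        exact congrArg (· ++ [π n]) ih
  have hSP : ∀ n, π n ∈ G.E ∧ (π n).1 = G.endFrom v (h n) ∧ I ((π n).2.2) :=
    fun n => SP (h n) (K n).1 (K n).2
  have hend1 : ∀ n, (π n).1 = G.endFrom v (h n) := fun n => (hSP n).2.1
  refine ⟨π, ⟨?_, ?_⟩, ?_, ?_⟩
  · rw [hend1 0]; rfl
  · intro n
    refine ⟨(hSP n).1, ?_⟩
    rw [hend1 (n+1), hhs, endFrom_snoc]
  · intro n hpn
    rw [← hofn] at hpn ⊢
    simp only [hπ, hstep, if_pos hpn]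
  · intro n
    rw [hend1 n]
    exact (K n).2

end ArenaLemmas


/-! ### Attractor to dead ends -/

section Attr

variable {C : Type}

noncomputable def stage (G : Arena C) : Ordinal.{0} → Set G.V := fun o =>
  { v | (G.P1 v ∧ ∃ e ∈ G.E, e.1 = v ∧ ∃ o' : {o' : Ordinal.{0} // o' < o}, e.2.2 ∈ stage G o'.1)
      ∨ (¬ G.P1 v ∧ ∀ e ∈ G.E, e.1 = v → ∃ o' : {o' : Ordinal.{0} // o' < o}, e.2.2 ∈ stage G o'.1) }
termination_by o => o
decreasing_by all_goals exact o'.2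

lemma stage_mem (G : Arena C) (o : Ordinal.{0}) (v : G.V) : v ∈ stage G o ↔
    (G.P1 v ∧ ∃ e ∈ G.E, e.1 = v ∧ ∃ o' < o, e.2.2 ∈ stage G o')
      ∨ (¬ G.P1 v ∧ ∀ e ∈ G.E, e.1 = v → ∃ o' < o, e.2.2 ∈ stage G o') := by
  rw [stage]; simp only [Set.mem_setOf_eq, Subtype.exists, exists_prop]

/-- Vertices from which Player 1 can force the play to get stuck. -/
def Attr (G : Arena C) (v : G.V) : Prop := ∃ o : Ordinal.{0}, v ∈ stage G o

noncomputable def rnk (G : Arena C) (v : G.V) : Ordinal.{0} :=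
  sInf {o | v ∈ stage G o}

lemma attr_stage_rank {G : Arena C} {v : G.V} (h : Attr G v) : v ∈ stage G (rnk G v) :=
  csInf_mem h

lemma rank_le {G : Arena C} {v : G.V} {o : Ordinal.{0}} (h : v ∈ stage G o) :
    rnk G v ≤ o :=
  csInf_le (OrderBot.bddBelow _) h

lemma attr_P1 {G : Arena C} {v : G.V} (h : Attr G v) (hp : G.P1 v) :
    ∃ e, e ∈ G.E ∧ e.1 = v ∧ Attr G e.2.2 ∧ rnk G e.2.2 < rnk G v := by
  rcases (stage_mem G (rnk G v) v).mp (attr_stage_rank h) with ⟨_, e, he, h1, o', ho', hst⟩ | ⟨hnp, _⟩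
  · exact ⟨e, he, h1, ⟨o', hst⟩, lt_of_le_of_lt (rank_le hst) ho'⟩
  · exact absurd hp hnp

lemma attr_P2 {G : Arena C} {v : G.V} (h : Attr G v) (hp : ¬ G.P1 v) :
    ∀ e ∈ G.E, e.1 = v → Attr G e.2.2 ∧ rnk G e.2.2 < rnk G v := by
  intro e he h1
  rcases (stage_mem G (rnk G v) v).mp (attr_stage_rank h) with ⟨hp1, _⟩ | ⟨_, hall⟩
  · exact absurd hp1 hp
  · obtain ⟨o', ho', hst⟩ := hall e he h1
    exact ⟨⟨o', hst⟩, lt_of_le_of_lt (rank_le hst) ho'⟩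

lemma notAttr_P1 {G : Arena C} {v : G.V} (h : ¬ Attr G v) (hp : G.P1 v) :
    ∀ e ∈ G.E, e.1 = v → ¬ Attr G e.2.2 := by
  intro e he h1 ⟨o, ho⟩
  exact h ⟨Order.succ o, (stage_mem G _ v).mpr (Or.inl ⟨hp, e, he, h1, o, Order.lt_succ o, ho⟩)⟩

lemma notAttr_P2 {G : Arena C} {v : G.V} (h : ¬ Attr G v) (hp : ¬ G.P1 v) :
    ∃ e, e ∈ G.E ∧ e.1 = v ∧ ¬ Attr G e.2.2 := by
  by_contra hc
  push_neg at hc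
  have hall : ∀ e ∈ G.E, e.1 = v → Attr G e.2.2 := fun e he h1 => hc e he h1
  set T := {e : G.V × C × G.V // e ∈ G.E ∧ e.1 = v}
  set f : T → Ordinal.{0} := fun e => rnk G e.1.2.2 with hf
  apply h
  refine ⟨Order.succ (⨆ e : T, f e), (stage_mem G _ v).mpr (Or.inr ⟨hp, ?_⟩)⟩
  intro e he h1
  refine ⟨rnk G e.2.2, ?_, attr_stage_rank (hall e he h1)⟩
  exact lt_of_le_of_lt (le_ciSup (Ordinal.bddAbove_range f) (⟨e, he, h1⟩ : T))
    (Order.lt_succ _)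

lemma ordinal_no_descent (f : ℕ → Ordinal.{0}) (h : ∀ n, f (n+1) < f n) : False := by
  obtain ⟨a, ⟨k, rfl⟩, hmin⟩ := Ordinal.lt_wf.has_min (Set.range f) ⟨f 0, 0, rfl⟩
  exact hmin _ ⟨k+1, rfl⟩ (h k)

lemma wins_empty_attr {G : Arena C} [Nonempty C] {v : G.V} (h : Wins G ∅ v) :
    Attr G v := by
  by_contra hna
  obtain ⟨τ, hτ⟩ := h
  obtain ⟨π, hplay, hcons, _⟩ := exists_play τ (fun u => ¬ Attr G u) v hna
    (fun u hu hp1 => notAttr_P2 hu hp1)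
    (fun l hl hp hI => by
      have hleg := τ.legal v l hl hp
      exact notAttr_P1 hI hp _ hleg.1 hleg.2)
  exact hτ π hplay hcons

end Attr

/-! ### The memory-based strategy -/

section Suff

variable {C : Type} [Nonempty C] (N : MemStruct C) (W : Set (ℕ → C)) (G : Arena C)

def GoodE (v : G.V) (m : N.M) (e : G.V × C × G.V) : Prop :=
  e ∈ G.E ∧ e.1 = v ∧ ∀ w : List C, N.updStar N.init w = m →
    Wins G (contAfter W w) v → Wins G (contAfter W (w ++ [e.2.1])) e.2.2

variable {N W G}

lemma good_exists (hsm : StronglyMonotone N W) (hwf : PrefWellFounded W)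
    {v : G.V} {m : N.M} (hp : G.P1 v)
    (hne : ∃ w : List C, N.updStar N.init w = m ∧ Wins G (contAfter W w) v) :
    ∃ e, GoodE N W G v m e := by
  set S : Set (List C) := {w | N.updStar N.init w = m ∧ Wins G (contAfter W w) v} with hS
  have hchain : ∀ w₁ ∈ S, ∀ w₂ ∈ S, PrefComparable W w₁ w₂ := by
    intro w₁ h₁ w₂ h₂
    exact hsm w₁ w₂ (by rw [h₁.1, h₂.1])
  obtain ⟨u, huS, humin⟩ := hwf S hne hchain
  have hmin' : ∀ w ∈ S, prefLe W u w := by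
    intro ww hw
    rcases hsm u ww (by rw [huS.1, hw.1]) with h | h
    · exact h
    · by_contra hle
      exact humin ww hw ⟨h, hle⟩
  obtain ⟨e, he, h1, hw'⟩ := wins_P1_step hp huS.2
  refine ⟨e, he, h1, fun ww hwm hwv => ?_⟩
  have hsub : contAfter W (u ++ [e.2.1]) ⊆ contAfter W (ww ++ [e.2.1]) :=
    prefLe_snoc (hmin' ww ⟨hwm, hwv⟩) e.2.1
  refine Wins.mono ?_ hsub
  rwa [contAfter_snoc]

variable (N W G)

open Classical in
noncomputable def sigNxt (v : G.V) (m : N.M) : G.V × C × G.V :=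
  if hp : G.P1 v then
    if ha : Attr G v then (attr_P1 ha hp).choose
    else if hg : ∃ e, GoodE N W G v m e then hg.choose
    else (G.succ v hp).choose
  else (v, Classical.arbitrary C, v)

lemma sigNxt_edge {v : G.V} (hp : G.P1 v) (m : N.M) :
    sigNxt N W G v m ∈ G.E ∧ (sigNxt N W G v m).1 = v := by
  unfold sigNxt
  rw [dif_pos hp]
  by_cases ha : Attr G v
  · rw [dif_pos ha]
    exact ⟨(attr_P1 ha hp).choose_spec.1, (attr_P1 ha hp).choose_spec.2.1⟩
  · rw [dif_neg ha]
    by_cases hg : ∃ e, GoodE N W G v m e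
    · rw [dif_pos hg]
      exact ⟨hg.choose_spec.1, hg.choose_spec.2.1⟩
    · rw [dif_neg hg]
      exact (G.succ v hp).choose_spec

lemma sigNxt_attr {v : G.V} (hp : G.P1 v) (ha : Attr G v) (m : N.M) :
    Attr G (sigNxt N W G v m).2.2 ∧ rnk G (sigNxt N W G v m).2.2 < rnk G v := by
  unfold sigNxt
  rw [dif_pos hp, dif_pos ha]
  exact ⟨(attr_P1 ha hp).choose_spec.2.2.1, (attr_P1 ha hp).choose_spec.2.2.2⟩

lemma sigNxt_good {v : G.V} (hp : G.P1 v) (ha : ¬ Attr G v) {m : N.M}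
    (hg : ∃ e, GoodE N W G v m e) :
    GoodE N W G v m (sigNxt N W G v m) := by
  unfold sigNxt
  rw [dif_pos hp, dif_neg ha, dif_pos hg]
  exact hg.choose_spec

noncomputable def sigma : G.Strategy :=
  ⟨fun v l => sigNxt N W G (G.endFrom v l) (N.updStar N.init (l.map fun e => e.2.1)),
   fun v l _ hp => sigNxt_edge N W G hp _⟩

lemma sigma_based : (sigma N W G).BasedOn N :=
  ⟨fun v m => sigNxt N W G v m, fun _ _ _ _ => rfl⟩

lemma sigma_optimal (hsafe : ∃ A₀ : Set (List C), W = SafeObj A₀)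
    (hwf : PrefWellFounded W) (hsm : StronglyMonotone N W) :
    (sigma N W G).Optimal W := by
  obtain ⟨A₀, hWA⟩ := hsafe
  intro v₀ h₀ π hplay hcons
  set wn : ℕ → List C := fun n => List.ofFn fun i : Fin n => Arena.playCol π i with hwn
  set vn : ℕ → G.V := fun n => (π n).1 with hvn
  have hend : ∀ n, G.endFrom v₀ (List.ofFn fun i : Fin n => π i) = vn n :=
    fun n => (play_hist hplay n).2
  have hhist : ∀ n, G.HistFrom v₀ (List.ofFn fun i : Fin n => π i) :=
    fun n => (play_hist hplay n).1
  have hnext : ∀ n, G.P1 (vn n) →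
      π n = sigNxt N W G (vn n) (N.updStar N.init (wn n)) := by
    intro n hp
    have hc := hcons n (by rw [hend n]; exact hp)
    rw [hc]
    show sigNxt N W G (G.endFrom v₀ _) (N.updStar N.init
      ((List.ofFn fun i : Fin n => π i).map fun e => e.2.1)) = _
    rw [hend n, map_colors]
  have step_attr : ∀ n, Attr G (vn n) → Attr G (vn (n+1)) ∧ rnk G (vn (n+1)) < rnk G (vn n) := by
    intro n ha
    have hlink : (π n).2.2 = vn (n+1) := (hplay.2 n).2
    by_cases hp : G.P1 (vn n)
    · have := sigNxt_attr N W G hp ha (N.updStar N.init (wn n))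
      rw [← hnext n hp] at this
      rwa [hlink] at this
    · have := attr_P2 ha hp (π n) (hplay.2 n).1 rfl
      rwa [hlink] at this
  have hNoAttr : ∀ n, ¬ Attr G (vn n) := by
    intro n ha
    have hall : ∀ k, Attr G (vn (n+k)) := by
      intro k; induction k with
      | zero => exact ha
      | succ k ih => exact (step_attr (n+k) ih).1
    exact ordinal_no_descent (fun k => rnk G (vn (n+k)))
      (fun k => (step_attr (n+k) (hall k)).2)
  have hInv : ∀ n, Wins G (contAfter W (wn n)) (vn n) := by
    intro n; induction n with
    | zero =>
        have : wn 0 = [] := by simp [hwn]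
        rw [this, contAfter_nil]
        have : vn 0 = v₀ := hplay.1
        rw [this]
        exact h₀
    | succ n ih =>
        have hwsnoc : wn (n+1) = wn n ++ [Arena.playCol π n] :=
          ofFn_snoc (fun k => Arena.playCol π k) n
        have hlink : (π n).2.2 = vn (n+1) := (hplay.2 n).2
        by_cases hp : G.P1 (vn n)
        · have hg : ∃ e, GoodE N W G (vn n) (N.updStar N.init (wn n)) e :=
            good_exists hsm hwf hp ⟨wn n, rfl, ih⟩
          have hgood := sigNxt_good N W G hp (hNoAttr n) hg
          rw [← hnext n hp] at hgood
          have := hgood.2.2 (wn n) rfl ih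
          rw [hwsnoc]
          show Wins G (contAfter W (wn n ++ [(π n).2.1])) (vn (n+1))
          rw [← hlink]
          exact this
        · have := wins_P2_step hp ih (π n) (hplay.2 n).1 rfl
          rw [hwsnoc, contAfter_snoc]
          rw [← hlink]
          exact this
  rw [hWA]
  intro hreach
  obtain ⟨K, hK⟩ := hreach
  have hKw : wn K ∈ A₀ := hK
  have hempty : contAfter W (wn K) = ∅ := by
    ext x
    simp only [Set.mem_empty_iff_false, iff_false]
    intro hx
    have hx' : wcat (wn K) x ∈ SafeObj A₀ := by rwa [hWA] at hx
    apply hx'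
    refine ⟨K, ?_⟩
    rw [wcat_ofFn_eq (wn K) x K (by simp [hwn])]
    exact hKw
  have := hInv K
  rw [hempty] at this
  exact hNoAttr K (wins_empty_attr this)

end Suff

/-! ### Necessity: the one-player gadget arena -/

section Nec

variable {C : Type} [Nonempty C]

def TV : Type := Sum Unit (Sum (Bool × ℕ) (Bool × ℕ))

def tu : TV := Sum.inl ()
def tpre (b : Bool) (n : ℕ) : TV := Sum.inr (Sum.inl (b, n))
def tpost (b : Bool) (n : ℕ) : TV := Sum.inr (Sum.inr (b, n))

variable (w : Bool → List C) (x : Bool → ℕ → C)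

def tf : TV → C × TV
  | Sum.inl _ => (x false 0, tpost false 0)
  | Sum.inr (Sum.inl (b, n)) =>
      if h : n < (w b).length then
        ((w b).get ⟨n, h⟩, if n + 1 < (w b).length then tpre b (n+1) else tu)
      else (x false 0, tpre b n)
  | Sum.inr (Sum.inr (b, n)) => (x b (n+1), tpost b (n+1))

def tE : Set (TV × C × TV) :=
  {e | (e.2.1, e.2.2) = tf w x e.1 ∨ (e.1 = tu ∧ e.2.1 = x true 0 ∧ e.2.2 = tpost true 0)}

def tArena : Arena C :=
  ⟨TV, fun _ => True, tE w x, fun v _ => ⟨(v, (tf w x v).1, (tf w x v).2), Or.inl rfl, rfl⟩⟩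

def tstart (b : Bool) : TV := if 0 < (w b).length then tpre b 0 else tu

lemma tE_pre {e : TV × C × TV} (he : e ∈ tE w x) {b : Bool} {n : ℕ}
    (h1 : e.1 = tpre b n) (hn : n < (w b).length) :
    e = (tpre b n, (w b).get ⟨n, hn⟩,
      if n + 1 < (w b).length then tpre b (n+1) else tu) := by
  rcases e with ⟨v', c', t'⟩
  simp only at h1
  subst h1
  rcases he with h | ⟨h, -, -⟩
  · have htf : tf w x (tpre b n) = ((w b).get ⟨n, hn⟩,
        if n + 1 < (w b).length then tpre b (n+1) else tu) := by
      show tf w x (Sum.inr (Sum.inl (b, n))) = _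
      simp only [tf]
      rw [dif_pos hn]
    have h' : (c', t') = ((w b).get ⟨n, hn⟩,
        if n + 1 < (w b).length then tpre b (n+1) else tu) := by
      rw [← htf]; exact h
    rw [Prod.mk.injEq] at h'
    rw [h'.1, h'.2]
  · exact absurd h (by simp [tpre, tu])

lemma tE_post {e : TV × C × TV} (he : e ∈ tE w x) {b : Bool} {n : ℕ}
    (h1 : e.1 = tpost b n) :
    e = (tpost b n, x b (n+1), tpost b (n+1)) := by
  rcases e with ⟨v', c', t'⟩
  simp only at h1
  subst h1
  rcases he with h | ⟨h, -, -⟩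
  · have h' : (c', t') = (x b (n+1), tpost b (n+1)) := by
      rw [h]; rfl
    rw [Prod.mk.injEq] at h'
    rw [h'.1, h'.2]
  · exact absurd h (by simp [tpost, tu])

lemma tE_u {e : TV × C × TV} (he : e ∈ tE w x) (h1 : e.1 = tu) :
    ∃ b : Bool, e = (tu, x b 0, tpost b 0) := by
  rcases e with ⟨v', c', t'⟩
  simp only at h1
  subst h1
  rcases he with h | ⟨-, h2, h3⟩
  · refine ⟨false, ?_⟩
    have h' : (c', t') = (x false 0, tpost false 0) := by rw [h]; rfl
    rw [Prod.mk.injEq] at h'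
    rw [h'.1, h'.2]
  · refine ⟨true, ?_⟩
    simp only at h2 h3
    rw [h2, h3]

lemma tshape (b : Bool) (π : ℕ → TV × C × TV)
    (hp : (tArena w x).PlayFrom (tstart w b) π) :
    ∃ bs : Bool, π (w b).length = (tu, x bs 0, tpost bs 0) ∧
      Arena.playCol π = wcat (w b) (x bs) := by
  have hB1 : ∀ n, n ≤ (w b).length →
      (π n).1 = if n < (w b).length then tpre b n else tu := by
    intro n
    induction n with
    | zero =>
        intro _
        rw [hp.1]
        rfl
    | succ n ih =>
        intro h
        have hn : n < (w b).length := Nat.lt_of_succ_le h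
        have h1 : (π n).1 = tpre b n := by rw [ih hn.le, if_pos hn]
        have he := tE_pre w x (hp.2 n).1 h1 hn
        have hlink : (π n).2.2 = (π (n+1)).1 := (hp.2 n).2
        rw [← hlink, he]
  have hB2 : ∀ n (hn : n < (w b).length), π n =
      (tpre b n, (w b).get ⟨n, hn⟩,
        if n + 1 < (w b).length then tpre b (n+1) else tu) := by
    intro n hn
    exact tE_pre w x (hp.2 n).1 (by rw [hB1 n hn.le, if_pos hn]) hn
  have hu : (π (w b).length).1 = tu := by
    have := hB1 (w b).length le_rfl
    rwa [if_neg (lt_irrefl _)] at this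
  obtain ⟨bs, hbs⟩ := tE_u w x (hp.2 (w b).length).1 hu
  have hpost : ∀ k, π ((w b).length + 1 + k) =
      (tpost bs k, x bs (k+1), tpost bs (k+1)) := by
    intro k
    induction k with
    | zero =>
        have h1 : (π ((w b).length + 1)).1 = tpost bs 0 := by
          rw [← (hp.2 (w b).length).2, hbs]
        exact tE_post w x (hp.2 ((w b).length + 1)).1 h1
    | succ k ih =>
        have h1 : (π ((w b).length + 1 + k + 1)).1 = tpost bs (k+1) := by
          rw [← (hp.2 ((w b).length + 1 + k)).2, ih]
        exact tE_post w x (hp.2 ((w b).length + 1 + k + 1)).1 h1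
  refine ⟨bs, hbs, funext fun n => ?_⟩
  rcases lt_trichotomy n (w b).length with h | h | h
  · have hn := hB2 n h
    show (π n).2.1 = wcat (w b) (x bs) n
    rw [hn]
    simp only [wcat]
    rw [dif_pos h]
  · subst h
    show (π (w b).length).2.1 = wcat (w b) (x bs) (w b).length
    rw [hbs]
    simp only [wcat]
    rw [dif_neg (lt_irrefl _)]
    simp
  · have h1 : n = (w b).length + 1 + (n - (w b).length - 1) := by omega
    show (π n).2.1 = wcat (w b) (x bs) n
    rw [h1, hpost (n - (w b).length - 1)]
    simp only [wcat]
    rw [dif_neg (by omega)]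
    congr 1
    omega

open Classical in
noncomputable def tnext (b : Bool) (v : TV) (l : List (TV × C × TV)) : TV × C × TV :=
  if (tArena w x).endFrom v l = tu then (tu, x b 0, tpost b 0)
  else ((tArena w x).endFrom v l, (tf w x ((tArena w x).endFrom v l)).1,
    (tf w x ((tArena w x).endFrom v l)).2)

noncomputable def tstrat (b : Bool) : (tArena w x).Strategy :=
  ⟨tnext w x b,
   by
    intro v l hl hp
    unfold tnext
    by_cases h : (tArena w x).endFrom v l = tu
    · rw [if_pos h]
      refine ⟨?_, h.symm⟩
      cases b
      · exact Or.inl rfl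
      · exact Or.inr ⟨rfl, rfl, rfl⟩
    · rw [if_neg h]
      exact ⟨Or.inl rfl, rfl⟩⟩

lemma tpost_inj {b₁ b₂ : Bool} {n₁ n₂ : ℕ} (h : tpost b₁ n₁ = tpost b₂ n₂) :
    b₁ = b₂ := by
  simp only [tpost] at h
  have h1 : ((b₁, n₁) : Bool × ℕ) = (b₂, n₂) :=
    Sum.inr_injective (Sum.inr_injective h)
  exact congrArg Prod.fst h1

lemma tstrat_winning (W : Set (ℕ → C)) (b : Bool) (hxb : wcat (w b) (x b) ∈ W) :
    (tstrat w x b).WinningFrom W (tstart w b) := by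
  intro π hplay hcons
  obtain ⟨bs, hbL, hcol⟩ := tshape w x b π hplay
  have hendL : (tArena w x).endFrom (tstart w b)
      (List.ofFn fun i : Fin (w b).length => π i) = (π (w b).length).1 :=
    (play_hist hplay _).2
  have hc := hcons (w b).length trivial
  have hval : π (w b).length = (tu, x b 0, tpost b 0) := by
    rw [hc]
    show tnext w x b _ _ = _
    unfold tnext
    rw [if_pos (by rw [hendL, hbL])]
  have hbb : bs = b := by
    rw [hval] at hbL
    have := congrArg (fun e : TV × C × TV => e.2.2) hbL
    exact (tpost_inj this).symm
  erw [hcol, hbb]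
  exact hxb

lemma necessity (W : Set (ℕ → C)) (N : MemStruct C)
    (hsuf : SufficesIn N W (fun _ => True)) : StronglyMonotone N W := by
  intro w₁ w₂ hm
  by_contra hcomp
  have h12 := not_or.mp hcomp
  obtain ⟨x₁, hx₁, hx₁n⟩ := Set.not_subset.mp h12.1
  obtain ⟨x₂, hx₂, hx₂n⟩ := Set.not_subset.mp h12.2
  set w : Bool → List C := fun b => bif b then w₂ else w₁ with hw
  set x : Bool → ℕ → C := fun b => bif b then x₂ else x₁ with hx
  have hxin : ∀ b, wcat (w b) (x b) ∈ W := by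
    intro b; cases b
    · exact hx₁
    · exact hx₂
  have hxout : ∀ b, wcat (w (!b)) (x b) ∉ W := by
    intro b; cases b
    · exact hx₁n
    · exact hx₂n
  obtain ⟨σ, hbased, hopt⟩ := hsuf (tArena w x) trivial
  obtain ⟨nxt, hnxt⟩ := hbased
  have hwinb : ∀ b, σ.WinningFrom W (tstart w b) := fun b =>
    hopt (tstart w b) ⟨tstrat w x b, tstrat_winning w x W b (hxin b)⟩
  have hplayb : ∀ b, ∃ π, (tArena w x).PlayFrom (tstart w b) π ∧
      σ.Consistent (tstart w b) π := by
    intro b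
    obtain ⟨π, h1, h2, _⟩ := exists_play σ (fun _ => True) (tstart w b) trivial
      (fun u _ hp1 => absurd trivial hp1) (fun _ _ _ _ => trivial)
    exact ⟨π, h1, h2⟩
  obtain ⟨π₁, hpl1, hco1⟩ := hplayb false
  obtain ⟨π₂, hpl2, hco2⟩ := hplayb true
  obtain ⟨a₁, ha₁, hcol1⟩ := tshape w x false π₁ hpl1
  obtain ⟨a₂, ha₂, hcol2⟩ := tshape w x true π₂ hpl2
  have key : ∀ (b : Bool) (π : ℕ → (tArena w x).V × C × (tArena w x).V),
      (tArena w x).PlayFrom (tstart w b) π → σ.Consistent (tstart w b) π →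
      (∀ a, π (w b).length = (tu, x a 0, tpost a 0) →
        Arena.playCol π = wcat (w b) (x a) →
        π (w b).length = nxt tu (N.updStar N.init (w b))) := by
    intro b π hpl hco a ha hcol
    have hc := hco (w b).length trivial
    have hx' := hnxt (tstart w b) (List.ofFn fun i : Fin (w b).length => π i)
      (play_hist hpl _).1 trivial
    rw [hc, hx']
    have hendL : (tArena w x).endFrom (tstart w b)
        (List.ofFn fun i : Fin (w b).length => π i) = (π (w b).length).1 :=
      (play_hist hpl _).2
    have hcolors : ((List.ofFn fun i : Fin (w b).length => π i).map fun e => e.2.1)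
        = w b := by
      refine (map_colors (G := tArena w x) π (w b).length).trans ?_
      have h2 : (fun i : Fin (w b).length => Arena.playCol π i)
          = fun i : Fin (w b).length => wcat (w b) (x a) i := by
        funext i; rw [hcol]
      rw [h2, wcat_take]
    rw [hendL, hcolors, ha]
  have k1 := key false π₁ hpl1 hco1 a₁ ha₁ hcol1
  have k2 := key true π₂ hpl2 hco2 a₂ ha₂ hcol2
  have hmm : N.updStar N.init (w false) = N.updStar N.init (w true) := hm
  have heq : π₁ (w false).length = π₂ (w true).length := by
    rw [k1, k2, hmm]
  have haa : a₁ = a₂ := by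
    rw [ha₁, ha₂] at heq
    have := congrArg (fun e : TV × C × TV => e.2.2) heq
    exact tpost_inj this
  have hW1 : wcat (w false) (x a₁) ∈ W := by
    rw [← hcol1]; exact hwinb false π₁ hpl1 hco1
  have hW2 : wcat (w true) (x a₂) ∈ W := by
    rw [← hcol2]; exact hwinb true π₂ hpl2 hco2
  cases ha : a₁ with
  | false =>
      apply hxout false
      rw [ha] at haa
      rw [← haa] at hW2
      exact hW2
  | true =>
      apply hxout true
      rw [ha] at hW1
      exact hW1

end Nec

/-- characterization for safety objectives with well-founded prefix
preorder: `N` suffices to play optimally for `W` in all arenas iff `W` is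
`N`-strongly-monotone. -/
theorem safety_characterization_wellFounded {C : Type} [Nonempty C]
    (W : Set (ℕ → C))
    (hsafe : ∃ A : Set (List C), W = SafeObj A)
    (hwf : PrefWellFounded W)
    (N : MemStruct C) :
    SufficesIn N W (fun _ => True) ↔ StronglyMonotone N W := by
  constructor
  · exact fun hsuf => necessity W N hsuf
  · intro hsm
    intro G _
    exact ⟨sigma N W G, sigma_based N W G, sigma_optimal N W G hsafe hwf hsm⟩

end RegularMemory
end
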